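/- Let S = {S_1, ..., S_m} and S' = {S'_1, ..., S'_m} be self-similar Jordan zippers in ℝ^n with equal signatures and with equal similarity ratios (Lip S_i = Lip S'_i for all i), whose attractors γ and γ' are arcs of bounded turning. Then the unique homeomorphism f : γ → γ' agreeing with S and S' is bi-Lipschitz: there exists C ≥ 1 with C^{-1}‖x − y‖ ≤ ‖f(x) − f(y)‖ ≤ C‖x − y‖ for all x, y ∈ γ. -/

import Mathlib

open Set Metric

/-- `S i`, for `i < m`, is a contracting similarity with ratio `r i ∈ (0,1)`. -/
def IsSimilaritySystem {X : Type*} [MetricSpace X] (m : ℕ)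
    (S : ℕ → X → X) (r : ℕ → ℝ) : Prop :=
  ∀ i < m, 0 < r i ∧ r i < 1 ∧ ∀ x y, dist (S i x) (S i y) = r i * dist x y

/-- Self-similar zipper with maps `S 0, …, S (m-1)`, ratios `r`, vertices `z 0, …, z m`,
signature `ε` (values in `{0,1}`).  Here `S i` plays the role of the map `S_{i+1}` of the
paper, so the zipper conditions read `S i (z 0) = z (i + ε i)` and
`S i (z m) = z (i + 1 - ε i)`. -/
def IsZipper {X : Type*} [MetricSpace X] (m : ℕ)
    (S : ℕ → X → X) (r : ℕ → ℝ) (z : ℕ → X) (ε : ℕ → ℕ) : Prop :=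
  1 ≤ m ∧ IsSimilaritySystem m S r ∧ (∀ i < m, ε i ≤ 1) ∧
    ∀ i < m, S i (z 0) = z (i + ε i) ∧ S i (z m) = z (i + 1 - ε i)

/-- Linear zipper on `[0,1]`, with vertices `0 = t 0 < t 1 < … < t m = 1`. -/
def IsLinearZipper (m : ℕ) (T : ℕ → ℝ → ℝ) (r : ℕ → ℝ) (t : ℕ → ℝ) (ε : ℕ → ℕ) : Prop :=
  IsZipper m T r t ε ∧ t 0 = 0 ∧ t m = 1 ∧ ∀ i < m, t i < t (i + 1)

/-- `K` is the attractor of the iterated function system `{S i : i < m}`. -/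
def IsAttractor {X : Type*} [MetricSpace X] (m : ℕ) (S : ℕ → X → X) (K : Set X) : Prop :=
  K.Nonempty ∧ IsCompact K ∧ K = ⋃ i ∈ Finset.range m, S i '' K

/-- `g` is a structural parametrization of the zipper `S` (with vertices `z`)
relative to the linear zipper `T` (with vertices `t`). -/
def IsStructuralParam {X : Type*} [MetricSpace X] (m : ℕ) (S : ℕ → X → X)
    (T : ℕ → ℝ → ℝ) (t : ℕ → ℝ) (z : ℕ → X) (g : ℝ → X) : Prop :=
  ContinuousOn g (Icc 0 1) ∧ (∀ i ≤ m, g (t i) = z i) ∧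
    ∀ i < m, ∀ x ∈ Icc (0:ℝ) 1, S i (g x) = g (T i x)

/-- A Jordan zipper: a zipper whose attractor `γ` is a Jordan arc, i.e. some structural
parametrization is injective on `[0,1]` (hence a homeomorphism onto `γ`). -/
def IsJordanZipper {X : Type*} [MetricSpace X] (m : ℕ) (S : ℕ → X → X) (r : ℕ → ℝ)
    (z : ℕ → X) (ε : ℕ → ℕ) (γ : Set X) : Prop :=
  IsZipper m S r z ε ∧ IsAttractor m S γ ∧
    ∃ T rT t g, IsLinearZipper m T rT t ε ∧ IsStructuralParam m S T t z g ∧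
      InjOn g (Icc 0 1) ∧ g '' Icc 0 1 = γ

/-- `g` is an injective continuous parametrization of the arc `γ` by `[0,1]`. -/
def IsArcParam {X : Type*} [MetricSpace X] (γ : Set X) (g : ℝ → X) : Prop :=
  ContinuousOn g (Icc 0 1) ∧ InjOn g (Icc 0 1) ∧ g '' Icc 0 1 = γ

/-- Bounded turning with constant `M`: every subarc `γ_{xy}` (expressed via any
parametrization of the arc) has diameter at most `M‖x - y‖`. -/
def BoundedTurning {X : Type*} [MetricSpace X] (γ : Set X) (M : ℝ) : Prop :=
  0 < M ∧ ∀ g : ℝ → X, IsArcParam γ g →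
    ∀ s ∈ Icc (0:ℝ) 1, ∀ u ∈ Icc (0:ℝ) 1, diam (g '' uIcc s u) ≤ M * dist (g s) (g u)

/-- `f` agrees with the systems `S` and `S'` on `γ`: `f ∘ S i = S' i ∘ f` on `γ`. -/
def Agrees {X Y : Type*} [MetricSpace X] [MetricSpace Y] (m : ℕ)
    (S : ℕ → X → X) (S' : ℕ → Y → Y) (γ : Set X) (f : X → Y) : Prop :=
  ∀ i < m, ∀ x ∈ γ, f (S i x) = S' i (f x)

/-- `f` restricts to a homeomorphism of the compact set `γ` onto `γ'`. -/
def IsHomeoOnto {X Y : Type*} [MetricSpace X] [MetricSpace Y]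
    (γ : Set X) (γ' : Set Y) (f : X → Y) : Prop :=
  ContinuousOn f γ ∧ InjOn f γ ∧ f '' γ = γ'

/-- Composition `S_{i₁} ∘ … ∘ S_{i_k}` along a multi-index (a list). -/
def compS {X : Type*} (S : ℕ → X → X) : List ℕ → X → X
  | [] => id
  | i :: l => S i ∘ compS S l

/-- Product of the ratios along a multi-index. -/
def ratioProd (p : ℕ → ℝ) (l : List ℕ) : ℝ := (l.map p).prod

namespace EqRatioAux

open Bornology

lemma h0mem : (0:ℝ) ∈ Icc (0:ℝ) 1 := left_mem_Icc.mpr zero_le_one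
lemma h1mem : (1:ℝ) ∈ Icc (0:ℝ) 1 := right_mem_Icc.mpr zero_le_one

lemma uIcc_sub01 {s u : ℝ} (hs : s ∈ Icc (0:ℝ) 1) (hu : u ∈ Icc (0:ℝ) 1) :
    uIcc s u ⊆ Icc (0:ℝ) 1 := by
  rw [← uIcc_of_le (zero_le_one : (0:ℝ) ≤ 1)]
  exact uIcc_subset_uIcc (by rwa [uIcc_of_le zero_le_one]) (by rwa [uIcc_of_le zero_le_one])

lemma diam_image_sim {X : Type*} [MetricSpace X] {S : X → X} {r : ℝ}
    (hr : 0 < r) (hS : ∀ x y, dist (S x) (S y) = r * dist x y)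
    {A : Set X} (hA : IsBounded A) :
    diam (S '' A) = r * diam A := by
  have hb : IsBounded (S '' A) := by
    rw [Metric.isBounded_iff]
    refine ⟨r * diam A, ?_⟩
    rintro _ ⟨x, hx, rfl⟩ _ ⟨y, hy, rfl⟩
    rw [hS]
    exact mul_le_mul_of_nonneg_left (dist_le_diam_of_mem hA hx hy) hr.le
  apply le_antisymm
  · apply diam_le_of_forall_dist_le (by positivity)
    rintro _ ⟨x, hx, rfl⟩ _ ⟨y, hy, rfl⟩
    rw [hS]
    exact mul_le_mul_of_nonneg_left (dist_le_diam_of_mem hA hx hy) hr.le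
  · rw [mul_comm, ← le_div_iff₀ hr]
    apply diam_le_of_forall_dist_le (div_nonneg diam_nonneg hr.le)
    intro x hx y hy
    rw [le_div_iff₀ hr, mul_comm, ← hS]
    exact dist_le_diam_of_mem hb (mem_image_of_mem _ hx) (mem_image_of_mem _ hy)

lemma real_sim_affine {T : ℝ → ℝ} {r : ℝ} (hr : 0 < r)
    (hT : ∀ x y, dist (T x) (T y) = r * dist x y) (x : ℝ) :
    T x = T 0 + (T 1 - T 0) * x := by
  have h10 : |T 1 - T 0| = r := by
    have := hT 1 0; rw [Real.dist_eq, Real.dist_eq] at this; simpa using this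
  have hx0 : |T x - T 0| = r * |x| := by
    have := hT x 0; rw [Real.dist_eq, Real.dist_eq] at this; simpa using this
  have hx1 : |T x - T 1| = r * |x - 1| := by
    have := hT x 1; rw [Real.dist_eq, Real.dist_eq] at this; simpa using this
  have e1 : (T 1 - T 0) ^ 2 = r ^ 2 := by rw [← sq_abs, h10]
  have e2 : (T x - T 0) ^ 2 = r ^ 2 * x ^ 2 := by
    rw [← sq_abs, hx0, mul_pow, sq_abs]
  have e3 : (T x - T 1) ^ 2 = r ^ 2 * (x - 1) ^ 2 := by
    rw [← sq_abs, hx1, mul_pow, sq_abs]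
  have hd : T 1 - T 0 ≠ 0 := by
    intro h; rw [h, abs_zero] at h10; exact hr.ne' h10.symm
  have key : (T 1 - T 0) * (T x - T 0) = (T 1 - T 0) * ((T 1 - T 0) * x) := by
    nlinarith [e1, e2, e3]
  have := mul_left_cancel₀ hd key
  linarith

/-- The affine inverse of the `i`-th map of a linear zipper. -/
noncomputable def zinv (T : ℕ → ℝ → ℝ) (i : ℕ) (x : ℝ) : ℝ :=
  (x - T i 0) / (T i 1 - T i 0)

/-- All the combinatorial data needed for the comparison of two "subinterval diameter"
functions `D1 D2` compatible with a common linear zipper structure on `[0,1]`. -/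
structure ZipData (m : ℕ) (t : ℕ → ℝ) (T : ℕ → ℝ → ℝ) (p : ℕ → ℝ)
    (rmax pmin : ℝ) (D1 D2 : ℝ → ℝ → ℝ) (c1 c2 : ℝ) : Prop where
  hm : 2 ≤ m
  ht0 : t 0 = 0
  htm : t m = 1
  htlt : ∀ i < m, t i < t (i+1)
  hTend : ∀ i < m, (T i 0 = t i ∧ T i 1 = t (i+1)) ∨ (T i 0 = t (i+1) ∧ T i 1 = t i)
  hTaff : ∀ i < m, ∀ x, T i x = T i 0 + (T i 1 - T i 0) * x
  hrm : ∀ i < m, t (i+1) - t i ≤ rmax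
  hrm1 : rmax < 1
  hpm : ∀ i < m, pmin ≤ p i
  hpm0 : 0 < pmin
  hs1 : ∀ i < m, ∀ x ∈ Icc (0:ℝ) 1, ∀ y ∈ Icc (0:ℝ) 1, D1 (T i x) (T i y) = p i * D1 x y
  hs2 : ∀ i < m, ∀ x ∈ Icc (0:ℝ) 1, ∀ y ∈ Icc (0:ℝ) 1, D2 (T i x) (T i y) = p i * D2 x y
  hmono1 : ∀ s u s' u' : ℝ, s' ∈ Icc (0:ℝ) 1 → u' ∈ Icc (0:ℝ) 1 →
    uIcc s u ⊆ uIcc s' u' → D1 s u ≤ D1 s' u'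
  hmono2 : ∀ s u s' u' : ℝ, s' ∈ Icc (0:ℝ) 1 → u' ∈ Icc (0:ℝ) 1 →
    uIcc s u ⊆ uIcc s' u' → D2 s u ≤ D2 s' u'
  hsplit2 : ∀ s u b : ℝ, s ∈ Icc (0:ℝ) 1 → u ∈ Icc (0:ℝ) 1 → b ∈ Icc (0:ℝ) 1 →
    D2 s u ≤ D2 s b + D2 b u
  hc1 : D1 0 1 = c1
  hc2 : D2 0 1 = c2
  hc1p : 0 < c1
  hc2p : 0 ≤ c2
  hnn1 : ∀ s u, 0 ≤ D1 s u

namespace ZipData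

variable {m : ℕ} {t : ℕ → ℝ} {T : ℕ → ℝ → ℝ} {p : ℕ → ℝ} {rmax pmin : ℝ}
  {D1 D2 : ℝ → ℝ → ℝ} {c1 c2 : ℝ}
  (Z : ZipData m t T p rmax pmin D1 D2 c1 c2)

include Z

lemma rmax0 : 0 < rmax := by
  have hm := Z.hm
  exact lt_of_lt_of_le (sub_pos.mpr (Z.htlt 0 (by omega))) (Z.hrm 0 (by omega))

lemma tle : ∀ k, k ≤ m → ∀ j, j ≤ k → t j ≤ t k := by
  intro k
  induction k with
  | zero =>
    intro _ j hj
    have : j = 0 := Nat.le_zero.mp hj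
    exact le_of_eq (by rw [this])
  | succ k ih =>
    intro hk j hj
    rcases Nat.lt_or_ge j (k+1) with h | h
    · exact le_trans (ih (by omega) j (by omega)) (Z.htlt k (by omega)).le
    · have : j = k+1 := by omega
      exact le_of_eq (by rw [this])

lemma tlt : ∀ j k, j < k → k ≤ m → t j < t k := by
  intro j k hjk hk
  cases k with
  | zero => omega
  | succ k => exact lt_of_le_of_lt (Z.tle k (by omega) j (by omega)) (Z.htlt k (by omega))

lemma tmem : ∀ k, k ≤ m → t k ∈ Icc (0:ℝ) 1 := by
  intro k hk
  constructor
  · rw [← Z.ht0]; exact Z.tle k hk 0 (Nat.zero_le _)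
  · rw [← Z.htm]; exact Z.tle m le_rfl k hk

lemma symm1 (s u : ℝ) (hs : s ∈ Icc (0:ℝ) 1) (hu : u ∈ Icc (0:ℝ) 1) : D1 s u = D1 u s :=
  le_antisymm (Z.hmono1 s u u s hu hs (by rw [uIcc_comm]))
    (Z.hmono1 u s s u hs hu (by rw [uIcc_comm]))

lemma symm2 (s u : ℝ) (hs : s ∈ Icc (0:ℝ) 1) (hu : u ∈ Icc (0:ℝ) 1) : D2 s u = D2 u s :=
  le_antisymm (Z.hmono2 s u u s hu hs (by rw [uIcc_comm]))
    (Z.hmono2 u s s u hs hu (by rw [uIcc_comm]))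

lemma dne (i : ℕ) (hi : i < m) : T i 1 - T i 0 ≠ 0 := by
  rcases Z.hTend i hi with ⟨h0, h1⟩ | ⟨h0, h1⟩ <;> rw [h0, h1]
  · exact ne_of_gt (sub_pos.mpr (Z.htlt i hi))
  · exact ne_of_lt (sub_neg.mpr (Z.htlt i hi))

lemma dabs (i : ℕ) (hi : i < m) : |T i 1 - T i 0| = t (i+1) - t i := by
  rcases Z.hTend i hi with ⟨h0, h1⟩ | ⟨h0, h1⟩ <;> rw [h0, h1]
  · exact abs_of_pos (sub_pos.mpr (Z.htlt i hi))
  · rw [abs_of_neg (sub_neg.mpr (Z.htlt i hi))]; ring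

lemma Tinv (i : ℕ) (hi : i < m) (x : ℝ) : T i (zinv T i x) = x := by
  rw [Z.hTaff i hi, zinv]
  field_simp [Z.dne i hi]
  ring

lemma inv0 (i : ℕ) (hi : i < m) : zinv T i (T i 0) = 0 := by
  rw [zinv]; simp

lemma inv1 (i : ℕ) (hi : i < m) : zinv T i (T i 1) = 1 := by
  rw [zinv]; exact div_self (Z.dne i hi)

lemma invmem (i : ℕ) (hi : i < m) {x : ℝ} (hx : x ∈ Icc (t i) (t (i+1))) :
    zinv T i x ∈ Icc (0:ℝ) 1 := by
  rw [zinv]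
  rcases Z.hTend i hi with ⟨h0, h1⟩ | ⟨h0, h1⟩
  · have hd : (0:ℝ) < T i 1 - T i 0 := by
      rw [h0, h1]; exact sub_pos.mpr (Z.htlt i hi)
    constructor
    · apply div_nonneg _ hd.le
      rw [h0]; linarith [hx.1]
    · rw [div_le_one hd, h0, h1]; linarith [hx.2]
  · have hd : T i 1 - T i 0 < 0 := by
      rw [h0, h1]; exact sub_neg.mpr (Z.htlt i hi)
    constructor
    · apply div_nonneg_of_nonpos _ hd.le
      rw [h0]; linarith [hx.2]
    · rw [div_le_iff_of_neg hd, h0, h1]; linarith [hx.1]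

lemma invdist (i : ℕ) (hi : i < m) (x y : ℝ) :
    |zinv T i x - zinv T i y| = |x - y| / (t (i+1) - t i) := by
  rw [zinv, zinv, div_sub_div_same, abs_div, Z.dabs i hi]
  have : x - T i 0 - (y - T i 0) = x - y := by ring
  rw [this]

lemma child_lb (i : ℕ) (hi : i < m) : pmin * c1 ≤ D1 (t i) (t (i+1)) := by
  have hpc : pmin * c1 ≤ p i * c1 := mul_le_mul_of_nonneg_right (Z.hpm i hi) Z.hc1p.le
  rcases Z.hTend i hi with ⟨h0e, h1e⟩ | ⟨h0e, h1e⟩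
  · have h := Z.hs1 i hi 0 h0mem 1 h1mem
    rw [h0e, h1e, Z.hc1] at h
    rw [h]; exact hpc
  · have h := Z.hs1 i hi 1 h1mem 0 h0mem
    rw [h0e, h1e] at h
    rw [h, Z.symm1 1 0 h1mem h0mem, Z.hc1]; exact hpc

lemma Knn : 0 ≤ c2 / (pmin * c1) :=
  div_nonneg Z.hc2p (mul_nonneg Z.hpm0.le Z.hc1p.le)

lemma cheap (s u : ℝ) (hs : s ∈ Icc (0:ℝ) 1) (hu : u ∈ Icc (0:ℝ) 1)
    (h : ∃ i < m, Icc (t i) (t (i+1)) ⊆ uIcc s u) :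
    D2 s u ≤ c2 / (pmin * c1) * D1 s u := by
  obtain ⟨i, hi, hsub⟩ := h
  have hD2 : D2 s u ≤ c2 := by
    rw [← Z.hc2]
    apply Z.hmono2 s u 0 1 h0mem h1mem
    apply uIcc_subset_uIcc <;> rw [uIcc_of_le (zero_le_one : (0:ℝ) ≤ 1)]
    exacts [hs, hu]
  have hD1 : pmin * c1 ≤ D1 s u := by
    refine le_trans (Z.child_lb i hi) (Z.hmono1 (t i) (t (i+1)) s u hs hu ?_)
    rwa [uIcc_of_le (Z.htlt i hi).le]
  have hne : pmin * c1 ≠ 0 := ne_of_gt (mul_pos Z.hpm0 Z.hc1p)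
  calc D2 s u ≤ c2 := hD2
    _ = c2 / (pmin * c1) * (pmin * c1) := (div_mul_cancel₀ _ hne).symm
    _ ≤ c2 / (pmin * c1) * D1 s u := mul_le_mul_of_nonneg_left hD1 Z.Knn

lemma zoom2 {B : ℝ} (i : ℕ) (hi : i < m) (x y : ℝ)
    (hx : x ∈ Icc (t i) (t (i+1))) (hy : y ∈ Icc (t i) (t (i+1)))
    (h : D2 (zinv T i x) (zinv T i y) ≤ B * D1 (zinv T i x) (zinv T i y)) :
    D2 x y ≤ B * D1 x y := by
  have hxm := Z.invmem i hi hx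
  have hym := Z.invmem i hi hy
  have e2 : D2 x y = p i * D2 (zinv T i x) (zinv T i y) := by
    conv_lhs => rw [← Z.Tinv i hi x, ← Z.Tinv i hi y]
    exact Z.hs2 i hi _ hxm _ hym
  have e1 : D1 x y = p i * D1 (zinv T i x) (zinv T i y) := by
    conv_lhs => rw [← Z.Tinv i hi x, ← Z.Tinv i hi y]
    exact Z.hs1 i hi _ hxm _ hym
  have hp0 : 0 ≤ p i := le_trans Z.hpm0.le (Z.hpm i hi)
  rw [e1, e2]
  calc p i * D2 (zinv T i x) (zinv T i y)
      ≤ p i * (B * D1 (zinv T i x) (zinv T i y)) := mul_le_mul_of_nonneg_left h hp0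
    _ = B * (p i * D1 (zinv T i x) (zinv T i y)) := by ring

lemma anchor : ∀ n : ℕ, ∀ s e : ℝ, (e = 0 ∨ e = 1) → s ∈ Icc (0:ℝ) 1 →
    rmax ^ n ≤ |s - e| → D2 s e ≤ c2 / (pmin * c1) * D1 s e := by
  intro n
  induction n with
  | zero =>
    intro s e he hs hr
    rw [pow_zero] at hr
    have hemem : e ∈ Icc (0:ℝ) 1 := by
      rcases he with rfl | rfl; exacts [h0mem, h1mem]
    have hm := Z.hm
    apply Z.cheap s e hs hemem
    refine ⟨0, by omega, ?_⟩
    rcases le_total s e with h | h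
    · rw [abs_of_nonpos (by linarith : s - e ≤ 0)] at hr
      have hs0 : s = 0 := le_antisymm (by linarith [hemem.2]) hs.1
      have he1 : e = 1 := le_antisymm hemem.2 (by linarith [hs.1])
      rw [hs0, he1, uIcc_of_le (zero_le_one : (0:ℝ) ≤ 1)]
      exact Icc_subset_Icc Z.ht0.ge (Z.tmem 1 (by omega)).2
    · rw [abs_of_nonneg (by linarith : (0:ℝ) ≤ s - e)] at hr
      have he0 : e = 0 := le_antisymm (by linarith [hs.2]) hemem.1
      have hs1' : s = 1 := le_antisymm hs.2 (by linarith [hemem.1])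
      rw [hs1', he0, uIcc_comm, uIcc_of_le (zero_le_one : (0:ℝ) ≤ 1)]
      exact Icc_subset_Icc Z.ht0.ge (Z.tmem 1 (by omega)).2
  | succ n ih =>
    intro s e he hs hr
    rcases he with rfl | rfl
    · -- e = 0, extreme child is child 0
      have hi : 0 < m := by have := Z.hm; omega
      by_cases hc : s ≤ t 1
      · -- zoom into child 0
        have hx : s ∈ Icc (t 0) (t (0+1)) := ⟨by rw [Z.ht0]; exact hs.1, hc⟩
        have hy : (0:ℝ) ∈ Icc (t 0) (t (0+1)) := by
          constructor
          · exact Z.ht0.le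
          · rw [← Z.ht0]; exact Z.tle 1 (by omega) 0 (by omega)
        have hecase : zinv T 0 (0:ℝ) = 0 ∨ zinv T 0 (0:ℝ) = 1 := by
          rcases Z.hTend 0 hi with ⟨h0e, h1e⟩ | ⟨h0e, h1e⟩
          · left; rw [zinv, h0e, Z.ht0]; simp
          · right; rw [zinv, h1e, Z.ht0]
            apply div_self
            rw [h0e]
            have hm := Z.hm
            have h01 := Z.tlt 0 (0+1) (by omega) (by omega)
            rw [Z.ht0] at h01
            simp only [zero_sub, ne_eq, neg_eq_zero]
            exact ne_of_gt h01
        have hlen0 : 0 < t (0+1) - t 0 := sub_pos.mpr (Z.htlt 0 hi)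
        have hlenr : t (0+1) - t 0 ≤ rmax := Z.hrm 0 hi
        have hbound : rmax ^ n ≤ |zinv T 0 s - zinv T 0 (0:ℝ)| := by
          rw [Z.invdist 0 hi]
          calc rmax ^ n = rmax ^ (n+1) / rmax := by
                rw [pow_succ, mul_div_assoc, div_self Z.rmax0.ne', mul_one]
            _ ≤ |s - 0| / rmax := div_le_div_of_nonneg_right hr Z.rmax0.le
            _ ≤ |s - 0| / (t (0+1) - t 0) :=
                div_le_div_of_nonneg_left (abs_nonneg _) hlen0 hlenr
        exact Z.zoom2 0 hi s 0 hx hy (ih _ _ hecase (Z.invmem 0 hi hx) hbound)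
      · push_neg at hc
        apply Z.cheap s 0 hs h0mem
        refine ⟨0, by omega, ?_⟩
        intro w hw
        rw [uIcc_comm, uIcc_of_le hs.1]
        exact ⟨by rw [← Z.ht0]; exact hw.1, le_trans hw.2 hc.le⟩
    · -- e = 1, extreme child is child m-1
      obtain ⟨i, hi, hi1⟩ : ∃ i, i < m ∧ i + 1 = m := ⟨m - 1, by have := Z.hm; omega, by have := Z.hm; omega⟩
      by_cases hc : t i ≤ s
      · have hx : s ∈ Icc (t i) (t (i+1)) := ⟨hc, by rw [hi1, Z.htm]; exact hs.2⟩
        have hy : (1:ℝ) ∈ Icc (t i) (t (i+1)) := by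
          constructor
          · exact (Z.tmem i (by omega)).2
          · rw [hi1, Z.htm]
        have hecase : zinv T i (1:ℝ) = 0 ∨ zinv T i (1:ℝ) = 1 := by
          have htm' : t (i+1) = 1 := by rw [hi1, Z.htm]
          rcases Z.hTend i hi with ⟨h0e, h1e⟩ | ⟨h0e, h1e⟩
          · right; conv_lhs => rw [← htm', ← h1e]
            exact Z.inv1 i hi
          · left; conv_lhs => rw [← htm', ← h0e]
            exact Z.inv0 i hi
        have hlen0 : 0 < t (i+1) - t i := sub_pos.mpr (Z.htlt i hi)
        have hlenr : t (i+1) - t i ≤ rmax := Z.hrm i hi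
        have hbound : rmax ^ n ≤ |zinv T i s - zinv T i (1:ℝ)| := by
          rw [Z.invdist i hi]
          calc rmax ^ n = rmax ^ (n+1) / rmax := by
                rw [pow_succ, mul_div_assoc, div_self Z.rmax0.ne', mul_one]
            _ ≤ |s - 1| / rmax := div_le_div_of_nonneg_right hr Z.rmax0.le
            _ ≤ |s - 1| / (t (i+1) - t i) :=
                div_le_div_of_nonneg_left (abs_nonneg _) hlen0 hlenr
        exact Z.zoom2 i hi s 1 hx hy (ih _ _ hecase (Z.invmem i hi hx) hbound)
      · push_neg at hc
        apply Z.cheap s 1 hs h1mem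
        refine ⟨i, hi, ?_⟩
        intro w hw
        rw [uIcc_of_le hs.2]
        exact ⟨le_trans hc.le hw.1, by rw [← Z.htm, ← hi1]; exact hw.2⟩

lemma anchorV (k : ℕ) (hk : k ≤ m) (s : ℝ) (hs : s ∈ Icc (0:ℝ) 1) (hne : s ≠ t k) :
    D2 s (t k) ≤ c2 / (pmin * c1) * D1 s (t k) := by
  have htk : t k ∈ Icc (0:ℝ) 1 := Z.tmem k hk
  have zoomfin : ∀ i, i < m → s ∈ Icc (t i) (t (i+1)) → t k ∈ Icc (t i) (t (i+1)) →
      (zinv T i (t k) = 0 ∨ zinv T i (t k) = 1) →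
      D2 s (t k) ≤ c2 / (pmin * c1) * D1 s (t k) := by
    intro i hi hx hy he
    have hd0 : 0 < |zinv T i s - zinv T i (t k)| := by
      rw [Z.invdist i hi]
      exact div_pos (abs_pos.mpr (sub_ne_zero.mpr hne)) (sub_pos.mpr (Z.htlt i hi))
    obtain ⟨n, hn⟩ := exists_pow_lt_of_lt_one hd0 Z.hrm1
    exact Z.zoom2 i hi s (t k) hx hy (Z.anchor n _ _ he (Z.invmem i hi hx) hn.le)
  rcases lt_trichotomy s (t k) with hlt | heq | hgt
  · have hk1 : 1 ≤ k := by
      by_contra h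
      have hk0 : k = 0 := by omega
      rw [hk0, Z.ht0] at hlt
      linarith [hs.1]
    obtain ⟨i, hi, hik⟩ : ∃ i, i < m ∧ i + 1 = k := ⟨k - 1, by omega, by omega⟩
    by_cases hc : t i ≤ s
    · apply zoomfin i hi ⟨hc, by rw [hik]; exact hlt.le⟩
        ⟨Z.tle k hk i (by omega), le_of_eq (by rw [hik])⟩
      rcases Z.hTend i hi with ⟨h0e, h1e⟩ | ⟨h0e, h1e⟩
      · right; conv_lhs => rw [← hik, ← h1e]
        exact Z.inv1 i hi
      · left; conv_lhs => rw [← hik, ← h0e]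
        exact Z.inv0 i hi
    · push_neg at hc
      apply Z.cheap s (t k) hs htk
      refine ⟨i, hi, ?_⟩
      intro w hw
      rw [uIcc_of_le hlt.le]
      exact ⟨le_trans hc.le hw.1, le_trans hw.2 (le_of_eq (by rw [hik]))⟩
  · exact absurd heq hne
  · have hkm : k < m := by
      by_contra h
      have : k = m := by omega
      rw [this, Z.htm] at hgt
      linarith [hs.2]
    by_cases hc : s ≤ t (k+1)
    · apply zoomfin k hkm ⟨hgt.le, hc⟩ ⟨le_rfl, (Z.htlt k hkm).le⟩
      rcases Z.hTend k hkm with ⟨h0e, h1e⟩ | ⟨h0e, h1e⟩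
      · left; conv_lhs => rw [← h0e]
        exact Z.inv0 k hkm
      · right; conv_lhs => rw [← h1e]
        exact Z.inv1 k hkm
    · push_neg at hc
      apply Z.cheap s (t k) hs htk
      refine ⟨k, hkm, ?_⟩
      intro w hw
      rw [uIcc_comm, uIcc_of_le hgt.le]
      exact ⟨hw.1, le_trans hw.2 hc.le⟩

lemma caseii (s u : ℝ) (hs : s ∈ Icc (0:ℝ) 1) (hu : u ∈ Icc (0:ℝ) 1)
    (j : ℕ) (hj : j < m) (h1 : t j ≤ s) (h2 : s < t (j+1)) (h3 : t (j+1) < u) :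
    D2 s u ≤ 2 * (c2 / (pmin * c1)) * D1 s u := by
  have hb : t (j+1) ∈ Icc (0:ℝ) 1 := Z.tmem (j+1) (by omega)
  have hbmem : t (j+1) ∈ uIcc s u := Icc_subset_uIcc ⟨h2.le, h3.le⟩
  have hsp := Z.hsplit2 s u (t (j+1)) hs hu hb
  have hA1 : D2 s (t (j+1)) ≤ c2 / (pmin * c1) * D1 s (t (j+1)) :=
    Z.anchorV (j+1) (by omega) s hs (ne_of_lt h2)
  have hA2 : D2 u (t (j+1)) ≤ c2 / (pmin * c1) * D1 u (t (j+1)) :=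
    Z.anchorV (j+1) (by omega) u hu (ne_of_gt h3)
  have hm1 : D1 s (t (j+1)) ≤ D1 s u :=
    Z.hmono1 _ _ s u hs hu (uIcc_subset_uIcc left_mem_uIcc hbmem)
  have hm2 : D1 u (t (j+1)) ≤ D1 s u :=
    Z.hmono1 _ _ s u hs hu (uIcc_subset_uIcc right_mem_uIcc hbmem)
  calc D2 s u ≤ D2 s (t (j+1)) + D2 (t (j+1)) u := hsp
    _ = D2 s (t (j+1)) + D2 u (t (j+1)) := by rw [Z.symm2 u (t (j+1)) hu hb]
    _ ≤ c2 / (pmin * c1) * D1 s (t (j+1)) + c2 / (pmin * c1) * D1 u (t (j+1)) :=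
        add_le_add hA1 hA2
    _ ≤ c2 / (pmin * c1) * D1 s u + c2 / (pmin * c1) * D1 s u :=
        add_le_add (mul_le_mul_of_nonneg_left hm1 Z.Knn) (mul_le_mul_of_nonneg_left hm2 Z.Knn)
    _ = 2 * (c2 / (pmin * c1)) * D1 s u := by ring

lemma exchild (s : ℝ) (h0 : 0 ≤ s) (h1 : s < 1) : ∃ j < m, t j ≤ s ∧ s < t (j+1) := by
  classical
  have hm0 : 0 < m := by have := Z.hm; omega
  set P := (Finset.range m).filter (fun i => t i ≤ s) with hP
  have hne : P.Nonempty := by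
    refine ⟨0, ?_⟩
    simp only [hP, Finset.mem_filter, Finset.mem_range]
    exact ⟨hm0, by rw [Z.ht0]; exact h0⟩
  set j := P.max' hne with hj
  have hjP : j ∈ P := P.max'_mem hne
  simp only [hP, Finset.mem_filter, Finset.mem_range] at hjP
  refine ⟨j, hjP.1, hjP.2, ?_⟩
  by_cases hjm : j + 1 = m
  · rw [hjm, Z.htm]; exact h1
  · by_contra hcon
    push_neg at hcon
    have hmem : j + 1 ∈ P := by
      simp only [hP, Finset.mem_filter, Finset.mem_range]
      exact ⟨by omega, hcon⟩
    have := P.le_max' _ hmem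
    rw [← hj] at this
    omega

lemma Bmain : ∀ n : ℕ, ∀ s u : ℝ, s ∈ Icc (0:ℝ) 1 → u ∈ Icc (0:ℝ) 1 → s ≠ u →
    rmax ^ n ≤ |s - u| → D2 s u ≤ 2 * (c2 / (pmin * c1)) * D1 s u := by
  intro n
  induction n with
  | zero =>
    intro s u hs hu hne hr
    rw [pow_zero] at hr
    have hsub : Icc (t 0) (t 1) ⊆ uIcc s u := by
      rcases le_total s u with h | h
      · rw [abs_of_nonpos (by linarith : s - u ≤ 0)] at hr
        have hs0 : s = 0 := le_antisymm (by linarith [hu.2]) hs.1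
        have hu1 : u = 1 := le_antisymm hu.2 (by linarith [hs.1])
        rw [hs0, hu1, uIcc_of_le (zero_le_one : (0:ℝ) ≤ 1)]
        exact Icc_subset_Icc Z.ht0.ge (Z.tmem 1 (by have := Z.hm; omega)).2
      · rw [abs_of_nonneg (by linarith : (0:ℝ) ≤ s - u)] at hr
        have hu0 : u = 0 := le_antisymm (by linarith [hs.2]) hu.1
        have hs1' : s = 1 := le_antisymm hs.2 (by linarith [hu.1])
        rw [hs1', hu0, uIcc_comm, uIcc_of_le (zero_le_one : (0:ℝ) ≤ 1)]
        exact Icc_subset_Icc Z.ht0.ge (Z.tmem 1 (by have := Z.hm; omega)).2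
    have hch : D2 s u ≤ c2 / (pmin * c1) * D1 s u :=
      Z.cheap s u hs hu ⟨0, by have := Z.hm; omega, hsub⟩
    have hnn : 0 ≤ c2 / (pmin * c1) * D1 s u := mul_nonneg Z.Knn (Z.hnn1 s u)
    linarith
  | succ n ih =>
    intro s u hs hu hne hr
    have step : ∀ s u : ℝ, s ∈ Icc (0:ℝ) 1 → u ∈ Icc (0:ℝ) 1 → s < u →
        rmax ^ (n+1) ≤ |s - u| → D2 s u ≤ 2 * (c2 / (pmin * c1)) * D1 s u := by
      intro s u hs hu hlt hr
      obtain ⟨j, hj, hj1, hj2⟩ := Z.exchild s hs.1 (lt_of_lt_of_le hlt hu.2)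
      by_cases hub : u ≤ t (j+1)
      · have hx : s ∈ Icc (t j) (t (j+1)) := ⟨hj1, hj2.le⟩
        have hy : u ∈ Icc (t j) (t (j+1)) := ⟨le_trans hj1 hlt.le, hub⟩
        have hlen0 : 0 < t (j+1) - t j := sub_pos.mpr (Z.htlt j hj)
        have hbound : rmax ^ n ≤ |zinv T j s - zinv T j u| := by
          rw [Z.invdist j hj]
          calc rmax ^ n = rmax ^ (n+1) / rmax := by
                rw [pow_succ, mul_div_assoc, div_self Z.rmax0.ne', mul_one]
            _ ≤ |s - u| / rmax := div_le_div_of_nonneg_right hr Z.rmax0.le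
            _ ≤ |s - u| / (t (j+1) - t j) :=
                div_le_div_of_nonneg_left (abs_nonneg _) hlen0 (Z.hrm j hj)
        have hne' : zinv T j s ≠ zinv T j u := by
          intro heq
          have : (0:ℝ) < |zinv T j s - zinv T j u| := by
            rw [Z.invdist j hj]
            exact div_pos (abs_pos.mpr (sub_ne_zero.mpr hlt.ne)) hlen0
          rw [heq, sub_self, abs_zero] at this
          exact lt_irrefl _ this
        exact Z.zoom2 j hj s u hx hy
          (ih _ _ (Z.invmem j hj hx) (Z.invmem j hj hy) hne' hbound)
      · push_neg at hub
        exact Z.caseii s u hs hu j hj hj1 hj2 hub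
    rcases hne.lt_or_gt with h | h
    · exact step s u hs hu h hr
    · rw [Z.symm2 s u hs hu, Z.symm1 s u hs hu]
      exact step u s hu hs h (by rwa [abs_sub_comm] at hr)

lemma final (s u : ℝ) (hs : s ∈ Icc (0:ℝ) 1) (hu : u ∈ Icc (0:ℝ) 1) (hne : s ≠ u) :
    D2 s u ≤ 2 * (c2 / (pmin * c1)) * D1 s u := by
  have h0 : 0 < |s - u| := abs_pos.mpr (sub_ne_zero.mpr hne)
  obtain ⟨n, hn⟩ := exists_pow_lt_of_lt_one h0 Z.hrm1
  exact Z.Bmain n s u hs hu hne hn.le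


end ZipData


lemma Dscale {X : Type*} [MetricSpace X] (m : ℕ) (T : ℕ → ℝ → ℝ) (SS : ℕ → X → X)
    (p : ℕ → ℝ) (G : ℝ → X) (Γ : Set X) (hΓ : Bornology.IsBounded Γ)
    (hGmem : ∀ x ∈ Icc (0:ℝ) 1, G x ∈ Γ)
    (hsim : ∀ i < m, 0 < p i ∧ ∀ x y, dist (SS i x) (SS i y) = p i * dist x y)
    (hTaff : ∀ i < m, ∀ x, T i x = T i 0 + (T i 1 - T i 0) * x)
    (hG : ∀ i < m, ∀ x ∈ Icc (0:ℝ) 1, G (T i x) = SS i (G x)) :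
    ∀ i < m, ∀ x ∈ Icc (0:ℝ) 1, ∀ y ∈ Icc (0:ℝ) 1,
      diam (G '' uIcc (T i x) (T i y)) = p i * diam (G '' uIcc x y) := by
  intro i hi x hx y hy
  have hAsub : uIcc x y ⊆ Icc (0:ℝ) 1 := uIcc_sub01 hx hy
  have haffim : ∀ a b : ℝ, (fun z => T i 0 + (T i 1 - T i 0) * z) '' uIcc a b =
      uIcc (T i 0 + (T i 1 - T i 0) * a) (T i 0 + (T i 1 - T i 0) * b) := by
    intro a b
    rw [show (fun z => T i 0 + (T i 1 - T i 0) * z) =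
        (fun w => T i 0 + w) ∘ (fun z => (T i 1 - T i 0) * z) from rfl,
      image_comp, image_const_mul_uIcc, image_const_add_uIcc]
  have him : T i '' uIcc x y = uIcc (T i x) (T i y) := by
    calc T i '' uIcc x y = (fun z => T i 0 + (T i 1 - T i 0) * z) '' uIcc x y :=
          image_congr fun a _ => hTaff i hi a
      _ = uIcc (T i 0 + (T i 1 - T i 0) * x) (T i 0 + (T i 1 - T i 0) * y) := haffim x y
      _ = uIcc (T i x) (T i y) := by rw [← hTaff i hi x, ← hTaff i hi y]
  have hGim : G '' (T i '' uIcc x y) = SS i '' (G '' uIcc x y) := by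
    rw [image_image, image_image]
    exact image_congr fun a ha => hG i hi a (hAsub ha)
  rw [← him, hGim]
  exact diam_image_sim (hsim i hi).1 (hsim i hi).2
    (hΓ.subset (by rintro _ ⟨a, ha, rfl⟩; exact hGmem a (hAsub ha)))

end EqRatioAux

open EqRatioAux EqRatioAux.ZipData in
/-- Jordan zippers with equal signatures and equal similarity ratios, whose
attractors are arcs of bounded turning, are bi-Lipschitz isomorphic. -/
theorem equal_ratios_biLipschitz {n : ℕ} (m : ℕ)
    (S S' : ℕ → EuclideanSpace ℝ (Fin n) → EuclideanSpace ℝ (Fin n)) (p q : ℕ → ℝ)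
    (z z' : ℕ → EuclideanSpace ℝ (Fin n)) (ε : ℕ → ℕ)
    (γ γ' : Set (EuclideanSpace ℝ (Fin n)))
    (hS : IsJordanZipper m S p z ε γ) (hS' : IsJordanZipper m S' q z' ε γ')
    (hpq : ∀ i < m, p i = q i)
    (M M' : ℝ) (hγ : BoundedTurning γ M) (hγ' : BoundedTurning γ' M')
    (f : EuclideanSpace ℝ (Fin n) → EuclideanSpace ℝ (Fin n))
    (hf : IsHomeoOnto γ γ' f) (hfa : Agrees m S S' γ f) :
    ∃ C ≥ (1:ℝ), ∀ x ∈ γ, ∀ y ∈ γ,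
      C⁻¹ * dist x y ≤ dist (f x) (f y) ∧ dist (f x) (f y) ≤ C * dist x y := by
  classical
  obtain ⟨hzip, hattr, T, rT, t, g, hlin, hparam, hginj, hgim⟩ := hS
  obtain ⟨hm1, hsimS, hεS, hzS⟩ := hzip
  obtain ⟨⟨hm1', hsimT, hεT, hTz⟩, ht0, htm, htlt⟩ := hlin
  obtain ⟨hgcont, hgz, hgcomm⟩ := hparam
  have hsimS' := hS'.1.2.1
  have hγc : IsCompact γ := hattr.2.1
  have hγc' : IsCompact γ' := hS'.2.1.2.1
  have hγb := hγc.isBounded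
  have hγb' := hγc'.isBounded
  obtain ⟨hfc, hfinj, hfim⟩ := hf
  have hTaff : ∀ i < m, ∀ x, T i x = T i 0 + (T i 1 - T i 0) * x := fun i hi =>
    real_sim_affine (hsimT i hi).1 (hsimT i hi).2.2
  have hTend : ∀ i < m, (T i 0 = t i ∧ T i 1 = t (i+1)) ∨ (T i 0 = t (i+1) ∧ T i 1 = t i) := by
    intro i hi
    have h := hTz i hi
    rw [ht0, htm] at h
    rcases Nat.le_one_iff_eq_zero_or_eq_one.mp (hεT i hi) with he | he
    · left
      rw [he] at h
      refine ⟨?_, ?_⟩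
      · have := h.1; simpa using this
      · have := h.2; simpa using this
    · right
      rw [he] at h
      refine ⟨?_, ?_⟩
      · have := h.1; simpa using this
      · have := h.2; simpa using this
  have hlen : ∀ i < m, t (i+1) - t i = rT i := by
    intro i hi
    have hd := (hsimT i hi).2.2 1 0
    rw [Real.dist_eq, Real.dist_eq] at hd
    norm_num at hd
    rcases hTend i hi with ⟨e0, e1⟩ | ⟨e0, e1⟩ <;> rw [e0, e1] at hd
    · rw [← hd, abs_of_pos (sub_pos.mpr (htlt i hi))]
    · rw [← hd, abs_of_neg (sub_neg.mpr (htlt i hi))]; ring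
  have hm2 : 2 ≤ m := by
    by_contra h
    have hm1'' : m = 1 := by omega
    have h1 := hlen 0 (by omega)
    have ht1 : t 1 = 1 := by rw [show (1:ℕ) = m from hm1''.symm, htm]
    rw [ht1, ht0] at h1
    have := (hsimT 0 (by omega)).2.1
    linarith
  have hm0 : 0 < m := by omega
  set pmin := (Finset.range m).inf' ⟨0, Finset.mem_range.mpr hm0⟩ p with hpmin
  have hpm : ∀ i < m, pmin ≤ p i := fun i hi => Finset.inf'_le p (Finset.mem_range.mpr hi)
  have hpm0 : 0 < pmin := by
    rw [hpmin]
    refine (Finset.lt_inf'_iff _).mpr ?_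
    intro i hi
    exact (hsimS i (Finset.mem_range.mp hi)).1
  set rmax := (Finset.range m).sup' ⟨0, Finset.mem_range.mpr hm0⟩ (fun i => t (i+1) - t i)
    with hrmax
  have hrm : ∀ i < m, t (i+1) - t i ≤ rmax := by
    intro i hi
    rw [hrmax]
    exact Finset.le_sup' (fun i => t (i+1) - t i) (Finset.mem_range.mpr hi)
  have hrm1 : rmax < 1 := by
    rw [hrmax]
    refine (Finset.sup'_lt_iff _).mpr ?_
    intro i hi
    rw [hlen i (Finset.mem_range.mp hi)]
    exact (hsimT i (Finset.mem_range.mp hi)).2.1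
  set G2 : ℝ → EuclideanSpace ℝ (Fin n) := fun x => f (g x) with hG2
  have hgmem : ∀ x ∈ Icc (0:ℝ) 1, g x ∈ γ := fun x hx => hgim ▸ mem_image_of_mem g hx
  have hγ'im : G2 '' Icc 0 1 = γ' := by
    rw [hG2, show (fun x => f (g x)) = f ∘ g from rfl, image_comp, hgim, hfim]
  have hG2mem : ∀ x ∈ Icc (0:ℝ) 1, G2 x ∈ γ' := fun x hx => hγ'im ▸ mem_image_of_mem G2 hx
  have hg1comm : ∀ i < m, ∀ x ∈ Icc (0:ℝ) 1, g (T i x) = S i (g x) := fun i hi x hx =>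
    (hgcomm i hi x hx).symm
  have hG2comm : ∀ i < m, ∀ x ∈ Icc (0:ℝ) 1, G2 (T i x) = S' i (G2 x) := by
    intro i hi x hx
    show f (g (T i x)) = S' i (f (g x))
    rw [← hgcomm i hi x hx]
    exact hfa i hi (g x) (hgmem x hx)
  have hsim1 : ∀ i < m, 0 < p i ∧ ∀ x y, dist (S i x) (S i y) = p i * dist x y := fun i hi =>
    ⟨(hsimS i hi).1, (hsimS i hi).2.2⟩
  have hsim2 : ∀ i < m, 0 < p i ∧ ∀ x y, dist (S' i x) (S' i y) = p i * dist x y := by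
    intro i hi
    rw [hpq i hi]
    exact ⟨(hsimS' i hi).1, (hsimS' i hi).2.2⟩
  set D1 : ℝ → ℝ → ℝ := fun s u => diam (g '' uIcc s u) with hD1
  set D2 : ℝ → ℝ → ℝ := fun s u => diam (G2 '' uIcc s u) with hD2
  have hs1 := Dscale m T S p g γ hγb hgmem hsim1 hTaff hg1comm
  have hs2 := Dscale m T S' p G2 γ' hγb' hG2mem hsim2 hTaff hG2comm
  have hsubγ : ∀ s u : ℝ, s ∈ Icc (0:ℝ) 1 → u ∈ Icc (0:ℝ) 1 → g '' uIcc s u ⊆ γ :=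
    fun s u hs hu => hgim ▸ image_mono (uIcc_sub01 hs hu)
  have hsubγ' : ∀ s u : ℝ, s ∈ Icc (0:ℝ) 1 → u ∈ Icc (0:ℝ) 1 → G2 '' uIcc s u ⊆ γ' := by
    intro s u hs hu
    rw [← hγ'im]
    exact image_mono (uIcc_sub01 hs hu)
  have hmono1 : ∀ s u s' u' : ℝ, s' ∈ Icc (0:ℝ) 1 → u' ∈ Icc (0:ℝ) 1 →
      uIcc s u ⊆ uIcc s' u' → D1 s u ≤ D1 s' u' := fun s u s' u' hs' hu' hsub =>
    diam_mono (image_mono hsub) (hγb.subset (hsubγ s' u' hs' hu'))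
  have hmono2 : ∀ s u s' u' : ℝ, s' ∈ Icc (0:ℝ) 1 → u' ∈ Icc (0:ℝ) 1 →
      uIcc s u ⊆ uIcc s' u' → D2 s u ≤ D2 s' u' := fun s u s' u' hs' hu' hsub =>
    diam_mono (image_mono hsub) (hγb'.subset (hsubγ' s' u' hs' hu'))
  have hsplit2 : ∀ s u b : ℝ, s ∈ Icc (0:ℝ) 1 → u ∈ Icc (0:ℝ) 1 → b ∈ Icc (0:ℝ) 1 →
      D2 s u ≤ D2 s b + D2 b u := by
    intro s u b hs hu hb
    have h1 : G2 '' uIcc s u ⊆ G2 '' uIcc s b ∪ G2 '' uIcc b u := by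
      rw [← image_union]
      exact image_mono uIcc_subset_uIcc_union_uIcc
    have hbd : Bornology.IsBounded (G2 '' uIcc s b ∪ G2 '' uIcc b u) :=
      hγb'.subset (union_subset (hsubγ' s b hs hb) (hsubγ' b u hb hu))
    refine le_trans (diam_mono h1 hbd) (diam_union' ⟨G2 b, ?_, ?_⟩)
    · exact mem_image_of_mem _ right_mem_uIcc
    · exact mem_image_of_mem _ left_mem_uIcc
  have hsplit1 : ∀ s u b : ℝ, s ∈ Icc (0:ℝ) 1 → u ∈ Icc (0:ℝ) 1 → b ∈ Icc (0:ℝ) 1 →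
      D1 s u ≤ D1 s b + D1 b u := by
    intro s u b hs hu hb
    have h1 : g '' uIcc s u ⊆ g '' uIcc s b ∪ g '' uIcc b u := by
      rw [← image_union]
      exact image_mono uIcc_subset_uIcc_union_uIcc
    have hbd : Bornology.IsBounded (g '' uIcc s b ∪ g '' uIcc b u) :=
      hγb.subset (union_subset (hsubγ s b hs hb) (hsubγ b u hb hu))
    refine le_trans (diam_mono h1 hbd) (diam_union' ⟨g b, ?_, ?_⟩)
    · exact mem_image_of_mem _ right_mem_uIcc
    · exact mem_image_of_mem _ left_mem_uIcc
  have hgne : g 0 ≠ g 1 := by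
    intro h
    exact (by norm_num : (0:ℝ) ≠ 1) (hginj h0mem h1mem h)
  have hc1p : 0 < D1 0 1 := by
    have hb : Bornology.IsBounded (g '' uIcc (0:ℝ) 1) := hγb.subset (hsubγ 0 1 h0mem h1mem)
    have hd : dist (g 0) (g 1) ≤ D1 0 1 :=
      dist_le_diam_of_mem hb (mem_image_of_mem g left_mem_uIcc) (mem_image_of_mem g right_mem_uIcc)
    have := dist_pos.mpr hgne
    linarith
  have hG2ne : G2 0 ≠ G2 1 := by
    intro h
    exact hgne (hfinj (hgmem 0 h0mem) (hgmem 1 h1mem) h)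
  have hc2p : 0 < D2 0 1 := by
    have hb : Bornology.IsBounded (G2 '' uIcc (0:ℝ) 1) := hγb'.subset (hsubγ' 0 1 h0mem h1mem)
    have hd : dist (G2 0) (G2 1) ≤ D2 0 1 :=
      dist_le_diam_of_mem hb (mem_image_of_mem G2 left_mem_uIcc)
        (mem_image_of_mem G2 right_mem_uIcc)
    have := dist_pos.mpr hG2ne
    linarith
  have Z12 : ZipData m t T p rmax pmin D1 D2 (D1 0 1) (D2 0 1) :=
    ⟨hm2, ht0, htm, htlt, hTend, hTaff, hrm, hrm1, hpm, hpm0, hs1, hs2, hmono1, hmono2,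
      hsplit2, rfl, rfl, hc1p, hc2p.le, fun s u => diam_nonneg⟩
  have Z21 : ZipData m t T p rmax pmin D2 D1 (D2 0 1) (D1 0 1) :=
    ⟨hm2, ht0, htm, htlt, hTend, hTaff, hrm, hrm1, hpm, hpm0, hs2, hs1, hmono2, hmono1,
      hsplit1, rfl, rfl, hc2p, hc1p.le, fun s u => diam_nonneg⟩
  obtain ⟨hM0, hBT⟩ := hγ
  obtain ⟨hM0', hBT'⟩ := hγ'
  set K12 := 2 * (D2 0 1 / (pmin * D1 0 1)) with hK12
  set K21 := 2 * (D1 0 1 / (pmin * D2 0 1)) with hK21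
  have hK12nn : 0 ≤ K12 := by
    rw [hK12]; exact mul_nonneg (by norm_num) Z12.Knn
  have hK21nn : 0 ≤ K21 := by
    rw [hK21]; exact mul_nonneg (by norm_num) Z21.Knn
  set C := max 1 (max (K12 * M) (K21 * M')) with hC
  have hC1 : (1:ℝ) ≤ C := le_max_left _ _
  have hC0 : 0 < C := lt_of_lt_of_le one_pos hC1
  refine ⟨C, hC1, ?_⟩
  intro x hx y hy
  by_cases hxy : x = y
  · subst hxy
    constructor <;> simp [dist_self]
  · rw [← hgim] at hx hy
    obtain ⟨s, hsmem, rfl⟩ := hx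
    obtain ⟨u, humem, rfl⟩ := hy
    have hsu : s ≠ u := by rintro rfl; exact hxy rfl
    have harc : IsArcParam γ g := ⟨hgcont, hginj, hgim⟩
    have hG2cont : ContinuousOn G2 (Icc 0 1) := hfc.comp hgcont hgmem
    have hG2inj : InjOn G2 (Icc 0 1) := fun a ha b hb h =>
      hginj ha hb (hfinj (hgmem a ha) (hgmem b hb) h)
    have harc' : IsArcParam γ' G2 := ⟨hG2cont, hG2inj, hγ'im⟩
    have hbt1 := hBT g harc s hsmem u humem
    have hbt2 := hBT' G2 harc' s hsmem u humem
    have key12 : D2 s u ≤ K12 * D1 s u := by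
      rw [hK12]; exact Z12.final s u hsmem humem hsu
    have key21 : D1 s u ≤ K21 * D2 s u := by
      rw [hK21]; exact Z21.final s u hsmem humem hsu
    have hdist1 : dist (g s) (g u) ≤ D1 s u :=
      dist_le_diam_of_mem (hγb.subset (hsubγ s u hsmem humem))
        (mem_image_of_mem g left_mem_uIcc) (mem_image_of_mem g right_mem_uIcc)
    have hdist2 : dist (G2 s) (G2 u) ≤ D2 s u :=
      dist_le_diam_of_mem (hγb'.subset (hsubγ' s u hsmem humem))
        (mem_image_of_mem G2 left_mem_uIcc) (mem_image_of_mem G2 right_mem_uIcc)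
    constructor
    · rw [inv_mul_le_iff₀ hC0]
      have hchain : dist (g s) (g u) ≤ K21 * M' * dist (G2 s) (G2 u) := by
        calc dist (g s) (g u) ≤ D1 s u := hdist1
          _ ≤ K21 * D2 s u := key21
          _ ≤ K21 * (M' * dist (G2 s) (G2 u)) := mul_le_mul_of_nonneg_left hbt2 hK21nn
          _ = K21 * M' * dist (G2 s) (G2 u) := (mul_assoc K21 M' _).symm
      refine le_trans hchain ?_
      have hCge : K21 * M' ≤ C := le_trans (le_max_right _ _) (le_max_right _ _)
      exact mul_le_mul_of_nonneg_right hCge dist_nonneg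
    · have hchain : dist (G2 s) (G2 u) ≤ K12 * M * dist (g s) (g u) := by
        calc dist (G2 s) (G2 u) ≤ D2 s u := hdist2
          _ ≤ K12 * D1 s u := key12
          _ ≤ K12 * (M * dist (g s) (g u)) := mul_le_mul_of_nonneg_left hbt1 hK12nn
          _ = K12 * M * dist (g s) (g u) := (mul_assoc K12 M _).symm
      refine le_trans hchain ?_
      have hCge : K12 * M ≤ C := le_trans (le_max_left _ _) (le_max_right _ _)
      exact mul_le_mul_of_nonneg_right hCge dist_nonneg
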